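/- arXiv:2105.13568 — 5 statements merged into one kernel-verified Lean document; each statement's English description precedes it below -/
import Mathlib

section
/- There exist constants K > 0 and c > 0 such that for all reals x, y, z with x ≥ y ≥ √(2x) and x ≥ z ≥ K·x/y, one has Ψ(x,y) − Ψ(x−z,y) ≥ c·z/(log x)^ν. -/
noncomputable def Psi (x y : ℝ) : ℕ :=
  {n : ℕ | 0 < n ∧ (n : ℝ) ≤ x ∧ ∀ p : ℕ, p.Prime → p ∣ n → (p : ℝ) ≤ y}.ncard

/-- ν = inf_{u>1} (2^u − 1)/(u − 1) -/
noncomputable def nu : ℝ := sInf ((fun u : ℝ => (2 ^ u - 1) / (u - 1)) '' Set.Ioi 1)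



lemma prod_small_le (n : ℕ) (n_large : 2 < n) :
    ∏ p ∈ Finset.range (2 * n / 3 + 1), p ^ (Nat.centralBinom n).factorization p ≤
      (2 * n) ^ Nat.sqrt (2 * n) * 4 ^ (2 * n / 3) := by
  have n_pos : 0 < n := by omega
  have n2_pos : 1 ≤ 2 * n := by omega
  let S := (Finset.range (2 * n / 3 + 1)).filter Nat.Prime
  let f x := x ^ n.centralBinom.factorization x
  have hSf : ∏ x ∈ S, f x = ∏ x ∈ Finset.range (2 * n / 3 + 1), f x := by
    refine Finset.prod_filter_of_ne fun p _ h => ?_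
    contrapose! h; dsimp only [f]
    rw [Nat.factorization_eq_zero_of_not_prime n.centralBinom h, pow_zero]
  rw [show (∏ p ∈ Finset.range (2 * n / 3 + 1), p ^ (Nat.centralBinom n).factorization p) =
      ∏ x ∈ Finset.range (2 * n / 3 + 1), f x from rfl, ← hSf,
    ← Finset.prod_filter_mul_prod_filter_not S (· ≤ Nat.sqrt (2 * n))]
  apply mul_le_mul'
  · refine (Finset.prod_le_prod' fun p _ => (?_ : f p ≤ 2 * n)).trans ?_
    · exact Nat.pow_factorization_choose_le (by positivity)
    have : (Finset.Icc 1 (Nat.sqrt (2 * n))).card = Nat.sqrt (2 * n) := by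
      rw [Nat.card_Icc, Nat.add_sub_cancel]
    rw [Finset.prod_const]
    refine pow_right_mono₀ n2_pos ((Finset.card_le_card fun x hx => ?_).trans this.le)
    obtain ⟨h1, h2⟩ := Finset.mem_filter.1 hx
    exact Finset.mem_Icc.mpr ⟨(Finset.mem_filter.1 h1).2.one_lt.le, h2⟩
  · refine le_trans ?_ (primorial_le_4_pow (2 * n / 3))
    refine (Finset.prod_le_prod' fun p hp => (?_ : f p ≤ p)).trans ?_
    · obtain ⟨h1, h2⟩ := Finset.mem_filter.1 hp
      refine (pow_right_mono₀ (Finset.mem_filter.1 h1).2.one_lt.le ?_).trans (pow_one p).le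
      exact Nat.factorization_choose_le_one (Nat.sqrt_lt'.mp <| not_le.1 h2)
    refine Finset.prod_le_prod_of_subset_of_one_le' (Finset.filter_subset _ _) ?_
    exact fun p hp _ => (Finset.mem_filter.1 hp).2.one_lt.le

lemma cheb_split (n : ℕ) (n_large : 2 < n) :
    Nat.centralBinom n ≤ ((2 * n) ^ Nat.sqrt (2 * n) * 4 ^ (2 * n / 3)) *
      (2 * n) ^ (((Finset.Ioc n (2 * n)).filter Nat.Prime).card) := by
  set P := (Finset.Ioc n (2 * n)).filter Nat.Prime with hP
  have hsub : Finset.range (2 * n / 3 + 1) ∪ P ⊆ Finset.range (2 * n + 1) := by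
    intro x hx
    rcases Finset.mem_union.1 hx with h | h
    · exact Finset.mem_range.2 (by have := Finset.mem_range.1 h; omega)
    · have := (Finset.mem_Ioc.1 (Finset.mem_filter.1 h).1).2
      exact Finset.mem_range.2 (by omega)
  have hdisj : Disjoint (Finset.range (2 * n / 3 + 1)) P := by
    rw [Finset.disjoint_left]
    intro x hx hx'
    have h1 := Finset.mem_range.1 hx
    have h2 := (Finset.mem_Ioc.1 (Finset.mem_filter.1 hx').1).1
    omega
  have key : Nat.centralBinom n =
      ∏ p ∈ Finset.range (2 * n / 3 + 1) ∪ P, p ^ (Nat.centralBinom n).factorization p := by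
    conv_lhs => rw [← Nat.prod_pow_factorization_centralBinom n]
    refine (Finset.prod_subset hsub ?_).symm
    intro x hx hx'
    by_cases hp : x.Prime
    · have hxr := Finset.mem_range.1 hx
      have hx1 : ¬ x < 2 * n / 3 + 1 := fun h => hx' (Finset.mem_union_left _ (Finset.mem_range.2 h))
      have hx2 : ¬ (n < x ∧ x ≤ 2 * n) := by
        intro ⟨ha, hb⟩
        exact hx' (Finset.mem_union_right _ (Finset.mem_filter.2 ⟨Finset.mem_Ioc.2 ⟨ha, hb⟩, hp⟩))
      have hxn : x ≤ n := by omega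
      have h3x : 2 * n < 3 * x := by omega
      rw [Nat.factorization_centralBinom_of_two_mul_self_lt_three_mul n_large hxn h3x, pow_zero]
    · rw [Nat.factorization_eq_zero_of_not_prime _ hp, pow_zero]
  rw [key, Finset.prod_union hdisj]
  refine mul_le_mul' (prod_small_le n n_large) ?_
  calc ∏ p ∈ P, p ^ (Nat.centralBinom n).factorization p
      ≤ ∏ _p ∈ P, 2 * n :=
        Finset.prod_le_prod' fun p _ => Nat.pow_factorization_choose_le (by positivity)
    _ = (2 * n) ^ P.card := Finset.prod_const _


lemma log_le_four_rpow {s : ℝ} (hs : 0 < s) : Real.log s ≤ 4 * s ^ ((1:ℝ)/4) := by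
  have h1 : Real.log (s ^ ((1:ℝ)/4)) = (1/4) * Real.log s := Real.log_rpow hs _
  have h2 : Real.log (s ^ ((1:ℝ)/4)) ≤ s ^ ((1:ℝ)/4) - 1 :=
    Real.log_le_sub_one_of_pos (Real.rpow_pos_of_pos hs _)
  have h3 : (0:ℝ) < s ^ ((1:ℝ)/4) := Real.rpow_pos_of_pos hs _
  nlinarith

lemma log_four_ge : (1.38:ℝ) ≤ Real.log 4 := by
  have h := Real.log_two_gt_d9
  have : Real.log 4 = 2 * Real.log 2 := by
    rw [show (4:ℝ) = 2^2 by norm_num, Real.log_pow]; push_cast; ring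
  nlinarith

lemma claimD {r : ℝ} (hr : (10:ℝ)^8 ≤ r) :
    r * (2*r) ^ Real.sqrt (2*r) ≤ (4:ℝ) ^ (r/6) := by
  have hr0 : (0:ℝ) < r := by nlinarith
  have hr1 : (1:ℝ) ≤ r := by nlinarith
  have h2r : (0:ℝ) < 2*r := by linarith
  have hq : (100:ℝ) ≤ r ^ ((1:ℝ)/4) := by
    have he : ((10:ℝ)^8) ^ ((1:ℝ)/4) = 100 := by
      rw [show ((10:ℝ)^8) = (100:ℝ)^(4:ℕ) by norm_num,
        show (1:ℝ)/4 = ((4:ℕ):ℝ)⁻¹ by norm_num]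
      exact Real.pow_rpow_inv_natCast (by norm_num) (by norm_num)
    calc (100:ℝ) = ((10:ℝ)^8) ^ ((1:ℝ)/4) := he.symm
      _ ≤ r ^ ((1:ℝ)/4) := Real.rpow_le_rpow (by positivity) hr (by norm_num)
  have hLpos : (0:ℝ) < r * (2*r) ^ Real.sqrt (2*r) :=
    mul_pos hr0 (Real.rpow_pos_of_pos h2r _)
  have hRpos : (0:ℝ) < (4:ℝ) ^ (r/6) := Real.rpow_pos_of_pos (by norm_num) _
  rw [← Real.exp_log hLpos, ← Real.exp_log hRpos]
  apply Real.exp_le_exp.mpr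
  rw [Real.log_mul hr0.ne' (Real.rpow_pos_of_pos h2r _).ne', Real.log_rpow h2r,
    Real.log_rpow (by norm_num : (0:ℝ) < 4)]
  -- goal : log r + √(2r) * log (2r) ≤ r/6 * log 4
  have b1 : Real.log r ≤ 4 * r ^ ((1:ℝ)/4) := log_le_four_rpow hr0
  have b2 : Real.log (2*r) ≤ 4 * (2*r) ^ ((1:ℝ)/4) := log_le_four_rpow h2r
  have hs : Real.sqrt (2*r) = (2*r) ^ ((1:ℝ)/2) := Real.sqrt_eq_rpow _
  have hsp : (0:ℝ) < (2*r) ^ ((1:ℝ)/2) := Real.rpow_pos_of_pos h2r _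
  have b3 : (2*r) ^ ((1:ℝ)/2) * ((2*r) ^ ((1:ℝ)/4)) = (2*r) ^ ((3:ℝ)/4) := by
    rw [← Real.rpow_add h2r]; norm_num
  have b4 : (2*r) ^ ((3:ℝ)/4) = 2 ^ ((3:ℝ)/4) * r ^ ((3:ℝ)/4) :=
    Real.mul_rpow (by norm_num) hr0.le
  have b5 : (2:ℝ) ^ ((3:ℝ)/4) ≤ 2 := by
    calc (2:ℝ) ^ ((3:ℝ)/4) ≤ 2 ^ (1:ℝ) :=
          Real.rpow_le_rpow_of_exponent_le one_le_two (by norm_num)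
      _ = 2 := Real.rpow_one 2
  have b6 : r ^ ((1:ℝ)/4) ≤ r ^ ((3:ℝ)/4) :=
    Real.rpow_le_rpow_of_exponent_le hr1 (by norm_num)
  have b7 : r ^ ((3:ℝ)/4) * r ^ ((1:ℝ)/4) = r := by
    rw [← Real.rpow_add hr0]; norm_num
  have hp34 : (0:ℝ) < r ^ ((3:ℝ)/4) := Real.rpow_pos_of_pos hr0 _
  have hp14 : (0:ℝ) < r ^ ((1:ℝ)/4) := Real.rpow_pos_of_pos hr0 _
  have key : Real.log r + Real.sqrt (2*r) * Real.log (2*r) ≤ 12 * r ^ ((3:ℝ)/4) := by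
    have : Real.sqrt (2*r) * Real.log (2*r) ≤ 8 * r ^ ((3:ℝ)/4) := by
      rw [hs]
      calc (2*r) ^ ((1:ℝ)/2) * Real.log (2*r)
          ≤ (2*r) ^ ((1:ℝ)/2) * (4 * (2*r) ^ ((1:ℝ)/4)) := by
            apply mul_le_mul_of_nonneg_left b2 hsp.le
        _ = 4 * ((2*r) ^ ((1:ℝ)/2) * (2*r) ^ ((1:ℝ)/4)) := by ring
        _ = 4 * (2 ^ ((3:ℝ)/4) * r ^ ((3:ℝ)/4)) := by rw [b3, b4]
        _ ≤ 8 * r ^ ((3:ℝ)/4) := by nlinarith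
    nlinarith
  have final : (12:ℝ) * r ^ ((3:ℝ)/4) ≤ r/6 * Real.log 4 := by
    have l4 := log_four_ge
    have : (23:ℝ) * r ^ ((3:ℝ)/4) ≤ 0.23 * r := by
      calc (23:ℝ) * r ^ ((3:ℝ)/4) ≤ 0.23 * (r ^ ((1:ℝ)/4) * r ^ ((3:ℝ)/4)) := by nlinarith
        _ = 0.23 * r := by rw [mul_comm (r ^ ((1:ℝ)/4))]; rw [b7]
    nlinarith
  linarith

lemma cheb (n : ℕ) (hn : 10^8 ≤ n) :
    (n:ℝ) / (5 * Real.log (2*n)) ≤ (((Finset.Ioc n (2*n)).filter Nat.Prime).card : ℝ) := by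
  set c := ((Finset.Ioc n (2*n)).filter Nat.Prime).card with hc
  have key : (4:ℕ)^n ≤ n * (((2 * n) ^ Nat.sqrt (2 * n) * 4 ^ (2 * n / 3)) * (2 * n) ^ c) :=
    (Nat.four_pow_lt_mul_centralBinom n (by omega)).le.trans
      (Nat.mul_le_mul_left n (cheb_split n (by omega)))
  have hrn : (10:ℝ)^8 ≤ (n:ℝ) := by exact_mod_cast hn
  have hn0 : (0:ℝ) < n := by nlinarith
  have h2n0 : (0:ℝ) < 2*(n:ℝ) := by linarith
  have h2n1 : (1:ℝ) ≤ 2*(n:ℝ) := by nlinarith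
  -- cast key to ℝ with rpow
  have keyR : (4:ℝ) ^ ((n:ℕ):ℝ) ≤
      (n:ℝ) * (((2*(n:ℝ)) ^ ((Nat.sqrt (2*n) : ℕ):ℝ) * (4:ℝ) ^ (((2*n/3 : ℕ)):ℝ)) *
        (2*(n:ℝ)) ^ ((c:ℕ):ℝ)) := by
    rw [Real.rpow_natCast, Real.rpow_natCast, Real.rpow_natCast, Real.rpow_natCast]
    exact_mod_cast key
  -- bound the three nat exponents
  have e1 : (2*(n:ℝ)) ^ ((Nat.sqrt (2*n) : ℕ):ℝ) ≤ (2*(n:ℝ)) ^ Real.sqrt (2*(n:ℝ)) := by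
    apply Real.rpow_le_rpow_of_exponent_le h2n1
    have := Real.nat_sqrt_le_real_sqrt (a := 2*n)
    convert this using 2 <;> push_cast <;> ring
  have e2 : (4:ℝ) ^ (((2*n/3 : ℕ)):ℝ) ≤ (4:ℝ) ^ (2*(n:ℝ)/3) := by
    apply Real.rpow_le_rpow_of_exponent_le (by norm_num)
    calc (((2*n/3 : ℕ)):ℝ) ≤ ((2*n : ℕ):ℝ)/((3:ℕ):ℝ) := Nat.cast_div_le
      _ = 2*(n:ℝ)/3 := by push_cast; ring
  have keyR2 : (4:ℝ) ^ ((n:ℝ)) ≤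
      (4:ℝ) ^ ((n:ℝ)/6) * (4:ℝ) ^ (2*(n:ℝ)/3) * (2*(n:ℝ)) ^ ((c:ℕ):ℝ) := by
    have hcp : (0:ℝ) < (2*(n:ℝ)) ^ ((c:ℕ):ℝ) := Real.rpow_pos_of_pos h2n0 _
    have hD := claimD hrn
    calc (4:ℝ) ^ ((n:ℝ)) ≤ (n:ℝ) * (((2*(n:ℝ)) ^ ((Nat.sqrt (2*n) : ℕ):ℝ) *
          (4:ℝ) ^ (((2*n/3 : ℕ)):ℝ)) * (2*(n:ℝ)) ^ ((c:ℕ):ℝ)) := keyR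
      _ = ((n:ℝ) * (2*(n:ℝ)) ^ ((Nat.sqrt (2*n) : ℕ):ℝ)) * (4:ℝ) ^ (((2*n/3 : ℕ)):ℝ) *
          (2*(n:ℝ)) ^ ((c:ℕ):ℝ) := by ring
      _ ≤ ((n:ℝ) * (2*(n:ℝ)) ^ Real.sqrt (2*(n:ℝ))) * (4:ℝ) ^ (2*(n:ℝ)/3) *
          (2*(n:ℝ)) ^ ((c:ℕ):ℝ) := by
          apply mul_le_mul_of_nonneg_right _ hcp.le
          apply mul_le_mul _ e2 (Real.rpow_pos_of_pos (by norm_num) _).le (by positivity)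
          exact mul_le_mul_of_nonneg_left e1 hn0.le
      _ ≤ (4:ℝ) ^ ((n:ℝ)/6) * (4:ℝ) ^ (2*(n:ℝ)/3) * (2*(n:ℝ)) ^ ((c:ℕ):ℝ) := by
          apply mul_le_mul_of_nonneg_right _ hcp.le
          exact mul_le_mul_of_nonneg_right hD (Real.rpow_pos_of_pos (by norm_num) _).le
  have cancel : (4:ℝ) ^ ((n:ℝ)/6) ≤ (2*(n:ℝ)) ^ ((c:ℕ):ℝ) := by
    have h5 : (0:ℝ) < (4:ℝ) ^ ((n:ℝ)/6 + 2*(n:ℝ)/3) := Real.rpow_pos_of_pos (by norm_num) _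
    have hsplit : (4:ℝ) ^ ((n:ℝ)) =
        (4:ℝ) ^ ((n:ℝ)/6 + 2*(n:ℝ)/3) * (4:ℝ) ^ ((n:ℝ)/6) := by
      rw [← Real.rpow_add (by norm_num)]; ring_nf
    have : (4:ℝ) ^ ((n:ℝ)/6 + 2*(n:ℝ)/3) * (4:ℝ) ^ ((n:ℝ)/6) ≤
        (4:ℝ) ^ ((n:ℝ)/6 + 2*(n:ℝ)/3) * (2*(n:ℝ)) ^ ((c:ℕ):ℝ) := by
      rw [← hsplit, Real.rpow_add (by norm_num)]
      calc (4:ℝ) ^ ((n:ℝ)) ≤ _ := keyR2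
        _ = (4:ℝ) ^ ((n:ℝ)/6) * (4:ℝ) ^ (2*(n:ℝ)/3) * (2*(n:ℝ)) ^ ((c:ℕ):ℝ) := rfl
        _ = (4:ℝ) ^ ((n:ℝ)/6) * (4:ℝ) ^ (2*(n:ℝ)/3) * (2*(n:ℝ)) ^ ((c:ℕ):ℝ) := rfl
    exact le_of_mul_le_mul_left this h5
  have hlog : (n:ℝ)/6 * Real.log 4 ≤ (c:ℝ) * Real.log (2*(n:ℝ)) := by
    have := Real.log_le_log (Real.rpow_pos_of_pos (by norm_num) _) cancel
    rwa [Real.log_rpow (by norm_num), Real.log_rpow h2n0] at this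
  have hlogpos : (0:ℝ) < Real.log (2*(n:ℝ)) := Real.log_pos (by nlinarith)
  rw [div_le_iff₀ (by positivity)]
  have l4 := log_four_ge
  have hcast : ((2*n : ℕ):ℝ) = 2*(n:ℝ) := by push_cast; ring
  -- done
  nlinarith [mul_pos hn0 hlogpos, (Nat.cast_nonneg c : (0:ℝ) ≤ c)]

lemma two_le_nu : 2 ≤ nu := by
  apply le_csInf
  · exact (Set.Nonempty.image _ ⟨2, by norm_num⟩)
  · rintro b ⟨u, hu, rfl⟩
    simp only [Set.mem_Ioi] at hu
    have hu1 : (0:ℝ) < u - 1 := by linarith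
    rw [le_div_iff₀ hu1]
    have l2a := Real.log_two_gt_d9
    have l2b := Real.log_two_lt_d9
    have key : (2:ℝ) ^ u = 4 * Real.exp ((u - 2) * Real.log 2) := by
      rw [← Real.exp_log (by norm_num : (0:ℝ) < 4), ← Real.exp_add]
      rw [show (4:ℝ) = 2^(2:ℕ) by norm_num, Real.log_pow]
      rw [show (2:ℝ)^u = Real.exp (Real.log 2 * u) from (Real.rpow_def_of_pos (by norm_num) u)]
      congr 1; push_cast; ring
    have he : (u - 2) * Real.log 2 + 1 ≤ Real.exp ((u - 2) * Real.log 2) :=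
      Real.add_one_le_exp _
    nlinarith [Real.exp_pos ((u - 2) * Real.log 2)]

set_option maxHeartbeats 1000000 in
lemma main_count {x y z : ℝ}
    (hyx : y ≤ x) (hy2 : 2 * x ≤ y ^ 2) (hy0 : 0 < y)
    (hzx : z ≤ x) (hzK : (10:ℝ)^17 ≤ z) (hzxy : (10:ℝ)^17 * (x / y) ≤ z)
    (hx17 : (10:ℝ)^17 ≤ x) :
    z / (20 * Real.log x ^ (2:ℕ)) ≤ (Psi x y : ℝ) - (Psi (x - z) y : ℝ) := by
  have hx0 : (0:ℝ) < x := by nlinarith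
  have hz0 : (0:ℝ) < z := by nlinarith
  have hxy0 : (0:ℝ) ≤ x / y := div_nonneg hx0.le hy0.le
  have hy4e8 : 4 * 10^8 ≤ y := by nlinarith
  set w : ℝ := min (y/2) (z/4) with hw
  have hw2e8 : 2 * 10^8 ≤ w := le_min (by linarith) (by linarith)
  have hwy : w ≤ y/2 := min_le_left _ _
  have hwz : w ≤ z/4 := min_le_right _ _
  have hwxy : x / y ≤ w := by
    refine le_min ?_ ?_
    · rw [div_le_div_iff₀ hy0 (by norm_num)]; nlinarith
    · linarith [hzxy, hxy0]
  set m : ℕ := ⌊w⌋₊ with hm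
  have hm8 : 10^8 ≤ m := Nat.le_floor (by push_cast; linarith)
  have hmw : (m:ℝ) ≤ w := Nat.floor_le (by linarith)
  have hwm1 : w < (m:ℝ) + 1 := Nat.lt_floor_add_one w
  have hm0 : (0:ℝ) < m := by
    have : ((10^8 : ℕ):ℝ) ≤ (m:ℝ) := by exact_mod_cast hm8
    push_cast at this; linarith
  have hlx1 : 1 ≤ Real.log x := by
    rw [Real.le_log_iff_exp_le hx0]
    have := Real.exp_one_lt_d9
    linarith
  set M : ℕ := ⌊Real.log x⌋₊ with hM
  have hMlog : (M:ℝ) ≤ Real.log x := Nat.floor_le (by linarith)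
  set P := (Finset.Ioc m (2*m)).filter Nat.Prime with hP
  have hPcard : (m:ℝ) / (5 * Real.log (2*m)) ≤ (P.card : ℝ) := cheb m hm8
  -- facts about elements of P
  have hPfact : ∀ p ∈ P, Nat.Prime p ∧ w < (p:ℝ) ∧ (p:ℝ) ≤ 2*w := by
    intro p hp
    obtain ⟨hIoc, hpr⟩ := Finset.mem_filter.mp hp
    obtain ⟨h1, h2⟩ := Finset.mem_Ioc.mp hIoc
    refine ⟨hpr, ?_, ?_⟩
    · have : (m:ℝ) + 1 ≤ p := by exact_mod_cast Nat.succ_le_of_lt h1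
      linarith
    · have : (p:ℝ) ≤ 2*(m:ℝ) := by exact_mod_cast h2
      linarith
  set a : ℕ → ℕ := fun p => ⌊(x-z)/p⌋₊ with ha
  set b : ℕ → ℕ := fun p => ⌊x/p⌋₊ with hb
  set B := P.sigma (fun p => Finset.Ioc (a p) (b p)) with hB
  set f : (_ : ℕ) × ℕ → ℕ := fun q => q.1 * q.2 with hf
  set Sx := {n : ℕ | 0 < n ∧ (n : ℝ) ≤ x ∧ ∀ p : ℕ, p.Prime → p ∣ n → (p : ℝ) ≤ y} with hSx
  set Sxz := {n : ℕ | 0 < n ∧ (n : ℝ) ≤ x - z ∧ ∀ p : ℕ, p.Prime → p ∣ n → (p : ℝ) ≤ y} with hSxz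
  have hsub : Sxz ⊆ Sx := fun n hn => ⟨hn.1, hn.2.1.trans (by linarith), hn.2.2⟩
  have hfin : Sx.Finite := Set.Finite.subset (Set.finite_Iic ⌊x⌋₊)
    (fun n hn => Set.mem_Iic.mpr (Nat.le_floor hn.2.1))
  have hfinD : (Sx \ Sxz).Finite := hfin.diff
  have hcast : ((Sx \ Sxz).ncard : ℝ) = (Psi x y : ℝ) - (Psi (x - z) y : ℝ) :=
    Set.cast_ncard_sdiff hsub hfin
  -- image of B lands in the difference set
  have himg : ∀ q ∈ B, f q ∈ Sx \ Sxz := by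
    rintro ⟨p, k⟩ hq
    obtain ⟨hpP, hkI⟩ := Finset.mem_sigma.mp hq
    obtain ⟨hppr, hpl, hpu⟩ := hPfact p hpP
    have hppos : (0:ℝ) < p := by linarith
    obtain ⟨hk1, hk2⟩ := Finset.mem_Ioc.mp hkI
    have hk0 : 0 < k := lt_of_le_of_lt (Nat.zero_le _) hk1
    have hkx : (k:ℝ) ≤ x/p := le_trans (by exact_mod_cast hk2)
      (Nat.floor_le (div_nonneg hx0.le hppos.le))
    have hxz : x - z < (p:ℝ) * k := by
      have h1 : (x-z)/p < (a p : ℝ) + 1 := Nat.lt_floor_add_one _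
      have h2 : (a p : ℝ) + 1 ≤ (k:ℝ) := by exact_mod_cast Nat.succ_le_of_lt hk1
      have := (div_lt_iff₀ hppos).mp (lt_of_lt_of_le h1 h2)
      linarith
    have hnx : ((p*k : ℕ):ℝ) ≤ x := by
      push_cast
      calc (p:ℝ) * k ≤ (p:ℝ) * (x/p) := by
            exact mul_le_mul_of_nonneg_left hkx hppos.le
        _ = x := by field_simp
    have hxpy : x / (p:ℝ) ≤ y := by
      rw [div_le_iff₀ hppos]
      have h1 : x/y < p := lt_of_le_of_lt hwxy hpl
      have := (div_lt_iff₀ hy0).mp h1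
      nlinarith
    constructor
    · refine ⟨Nat.mul_pos hppr.pos hk0, hnx, ?_⟩
      intro q hqpr hqdvd
      rcases (Nat.Prime.dvd_mul hqpr).mp hqdvd with hqp | hqk
      · have : q = p := (Nat.prime_dvd_prime_iff_eq hqpr hppr).mp hqp
        subst this
        linarith
      · have h1 : q ≤ k := Nat.le_of_dvd hk0 hqk
        have : (q:ℝ) ≤ (k:ℝ) := by exact_mod_cast h1
        linarith [hkx, hxpy]
    · rintro ⟨-, hle, -⟩
      rw [show ((p*k : ℕ):ℝ) = (p:ℝ)*k by push_cast; ring] at hle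
      linarith
  -- fiber bound
  have hfib : ∀ v ∈ B.image f, (B.filter (fun q => f q = v)).card ≤ M := by
    intro v hv
    obtain ⟨q0, hq0B, hq0v⟩ := Finset.mem_image.mp hv
    have hvD := himg q0 hq0B
    rw [hq0v] at hvD
    have hv0 : 0 < v := hvD.1.1
    have hvx : (v:ℝ) ≤ x := hvD.1.2.1
    set t := P.filter (· ∣ v) with ht
    have h1 : (B.filter (fun q => f q = v)).card ≤ t.card := by
      apply Finset.card_le_card_of_injOn (fun q => q.1)
      · intro q hq
        obtain ⟨hqB, hqv⟩ := Finset.mem_filter.mp hq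
        refine Finset.mem_filter.mpr ⟨(Finset.mem_sigma.mp hqB).1, ?_⟩
        exact hqv ▸ Dvd.intro _ rfl
      · intro q hq q' hq' hfst
        simp only [Finset.coe_filter, Set.mem_setOf_eq] at hq hq'
        have hq1 : q.1 ∈ P := (Finset.mem_sigma.mp hq.1).1
        have hp0 : 0 < q.1 := (hPfact _ hq1).1.pos
        have hmul : q.1 * q.2 = q'.1 * q'.2 := by
          have e1 : f q = v := hq.2
          have e2 : f q' = v := hq'.2
          simpa [hf] using e1.trans e2.symm
        have hfst' : q.1 = q'.1 := hfst
        rw [hfst'] at hmul hp0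
        have : q.2 = q'.2 := Nat.eq_of_mul_eq_mul_left hp0 hmul
        exact Sigma.ext hfst' (heq_of_eq this)
    have h2 : t.card ≤ M := by
      have hprm : ∀ p ∈ t, Nat.Prime p := fun p hp =>
        (hPfact p (Finset.mem_filter.mp hp).1).1
      have hdvd : (∏ p ∈ t, p) ∣ v :=
        Finset.prod_primes_dvd v (fun p hp => (hprm p hp).prime)
          (fun p hp => (Finset.mem_filter.mp hp).2)
      have hle : (∏ p ∈ t, p) ≤ v := Nat.le_of_dvd hv0 hdvd
      have h3 : (3:ℝ) ^ t.card ≤ ((∏ p ∈ t, p : ℕ) : ℝ) := by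
        push_cast
        calc (3:ℝ) ^ t.card = ∏ _p ∈ t, (3:ℝ) := by
              rw [Finset.prod_const]
          _ ≤ ∏ p ∈ t, (p:ℝ) := by
              refine Finset.prod_le_prod (fun _ _ => by norm_num) (fun p hp => ?_)
              have := (hPfact p (Finset.mem_filter.mp hp).1).2.1
              linarith
      have hexp : Real.exp ((t.card : ℕ):ℝ) ≤ x := by
        have e1 : Real.exp ((t.card : ℕ):ℝ) = Real.exp 1 ^ t.card := by
          rw [← Real.exp_nat_mul]; norm_num
        have e2 : Real.exp 1 ^ t.card ≤ (3:ℝ) ^ t.card := by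
          apply pow_le_pow_left₀ (Real.exp_pos 1).le
          linarith [Real.exp_one_lt_d9]
        have e3 : ((∏ p ∈ t, p : ℕ) : ℝ) ≤ (v:ℝ) := by exact_mod_cast hle
        calc Real.exp ((t.card : ℕ):ℝ) = Real.exp 1 ^ t.card := e1
          _ ≤ (3:ℝ) ^ t.card := e2
          _ ≤ ((∏ p ∈ t, p : ℕ) : ℝ) := h3
          _ ≤ (v:ℝ) := e3
          _ ≤ x := hvx
      have : ((t.card : ℕ):ℝ) ≤ Real.log x := (Real.le_log_iff_exp_le hx0).mpr hexp
      exact Nat.le_floor this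
    exact h1.trans h2
  have hBM : B.card ≤ M * (B.image f).card := Finset.card_le_mul_card_image B M hfib
  -- lower bound on B.card
  have hperp : ∀ p ∈ P, z/(4*(m:ℝ)) ≤ (((b p - a p : ℕ)):ℝ) := by
    intro p hpP
    obtain ⟨hppr, hpl, hpu⟩ := hPfact p hpP
    have hppos : (0:ℝ) < p := by linarith
    have hzp2 : 2 ≤ z / p := by
      rw [le_div_iff₀ hppos]; linarith
    have hbp : x/(p:ℝ) - 1 < (b p : ℝ) := by
      have h1 : x/(p:ℝ) < (⌊x/(p:ℝ)⌋₊ : ℝ) + 1 := Nat.lt_floor_add_one _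
      have h2 : (b p : ℝ) = (⌊x/(p:ℝ)⌋₊ : ℝ) := by simp only [hb]
      linarith
    have hap : (a p : ℝ) ≤ (x-z)/p := by
      have h2 : (a p : ℝ) = (⌊(x-z)/(p:ℝ)⌋₊ : ℝ) := by simp only [ha]
      rw [h2]
      exact Nat.floor_le (div_nonneg (by linarith) hppos.le)
    have hdiff : z/p - 1 ≤ (b p : ℝ) - (a p : ℝ) := by
      have hsd : (x - z)/(p:ℝ) = x/p - z/p := sub_div x z p
      linarith [hbp, hap]
    have hab : a p < b p := by
      have : (a p : ℝ) < (b p : ℝ) := by linarith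
      exact_mod_cast this
    have hcastsub : (((b p - a p : ℕ)):ℝ) = (b p : ℝ) - (a p : ℝ) := by
      rw [Nat.cast_sub hab.le]
    rw [hcastsub]
    have hp2m : (p:ℝ) ≤ 2*(m:ℝ) := by
      have := (Finset.mem_Ioc.mp (Finset.mem_filter.mp hpP).1).2
      exact_mod_cast this
    have h2p4m : z/(4*(m:ℝ)) ≤ z/(2*(p:ℝ)) := by
      apply div_le_div_of_nonneg_left hz0.le (by linarith)
      linarith
    have h3 : (z/(p:ℝ))/2 = z/(2*(p:ℝ)) := by rw [div_div, mul_comm]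
    linarith [h2p4m, hzp2, hdiff, h3]
  -- assemble
  have hBsum : B.card = ∑ p ∈ P, (b p - a p) := by
    rw [hB, Finset.card_sigma]
    exact Finset.sum_congr rfl (fun p _ => Nat.card_Ioc _ _)
  have hBlow : (P.card : ℝ) * (z/(4*(m:ℝ))) ≤ (B.card : ℝ) := by
    rw [hBsum, Nat.cast_sum]
    calc (P.card : ℝ) * (z/(4*(m:ℝ))) = ∑ _p ∈ P, z/(4*(m:ℝ)) := by
          rw [Finset.sum_const, nsmul_eq_mul]
      _ ≤ ∑ p ∈ P, (((b p - a p : ℕ)):ℝ) := Finset.sum_le_sum (fun p hp => hperp p hp)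
  have hlog2m_pos : 0 < Real.log (2*(m:ℝ)) := Real.log_pos (by linarith)
  have hlog2m_le : Real.log (2*(m:ℝ)) ≤ Real.log x := by
    apply Real.log_le_log (by linarith)
    linarith [hmw, hwy, hyx]
  have hlpos : (0:ℝ) < Real.log x := by linarith
  have hB2 : z / (20 * Real.log x) ≤ (B.card : ℝ) := by
    have e1 : (m:ℝ)/(5*Real.log (2*(m:ℝ))) * (z/(4*(m:ℝ))) = z/(20*Real.log (2*(m:ℝ))) := by
      field_simp
      ring
    have e2 : z/(20*Real.log x) ≤ z/(20*Real.log (2*(m:ℝ))) := by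
      apply div_le_div_of_nonneg_left hz0.le (by positivity) (by linarith)
    calc z/(20*Real.log x) ≤ z/(20*Real.log (2*(m:ℝ))) := e2
      _ = (m:ℝ)/(5*Real.log (2*(m:ℝ))) * (z/(4*(m:ℝ))) := e1.symm
      _ ≤ (P.card:ℝ) * (z/(4*(m:ℝ))) := by
          apply mul_le_mul_of_nonneg_right hPcard (by positivity)
      _ ≤ (B.card:ℝ) := hBlow
  have himgcard : z / (20 * Real.log x ^ (2:ℕ)) ≤ ((B.image f).card : ℝ) := by
    have h1 : (B.card : ℝ) ≤ (M:ℝ) * ((B.image f).card:ℝ) := by exact_mod_cast hBM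
    have hic : (0:ℝ) ≤ ((B.image f).card:ℝ) := by positivity
    have h2 : (M:ℝ) * ((B.image f).card:ℝ) ≤ Real.log x * ((B.image f).card:ℝ) :=
      mul_le_mul_of_nonneg_right hMlog hic
    rw [div_le_iff₀ (by positivity)] at hB2 ⊢
    have h3 : (B.card:ℝ)*(20*Real.log x) ≤ Real.log x * ((B.image f).card:ℝ) * (20*Real.log x) :=
      mul_le_mul_of_nonneg_right (h1.trans h2) (by positivity)
    have h4 : Real.log x * ((B.image f).card:ℝ) * (20*Real.log x)
        = ((B.image f).card:ℝ) * (20 * Real.log x^(2:ℕ)) := by ring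
    linarith
  have hsubD : ↑(B.image f) ⊆ Sx \ Sxz := by
    intro v hv
    obtain ⟨q, hq, rfl⟩ := Finset.mem_image.mp (Finset.mem_coe.mp hv)
    exact himg q hq
  have hfinal : ((B.image f).card : ℝ) ≤ ((Sx \ Sxz).ncard : ℝ) := by
    have h5 := Set.ncard_le_ncard hsubD hfinD
    rw [Set.ncard_coe_finset] at h5
    exact_mod_cast h5
  calc z / (20 * Real.log x ^ (2:ℕ)) ≤ ((B.image f).card : ℝ) := himgcard
    _ ≤ ((Sx \ Sxz).ncard : ℝ) := hfinal
    _ = (Psi x y : ℝ) - (Psi (x - z) y : ℝ) := hcast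


theorem stmt1 :
    ∃ K > (0 : ℝ), ∃ c > (0 : ℝ), ∀ x y z : ℝ,
      y ≤ x → Real.sqrt (2 * x) ≤ y → z ≤ x → K * x / y ≤ z →
      c * z / Real.log x ^ nu ≤ (Psi x y : ℝ) - (Psi (x - z) y : ℝ) := by
  refine ⟨10^17, by norm_num, 1/100, by norm_num, ?_⟩
  intro x y z hyx hsy hzx hKz
  by_cases hx0 : 0 < x
  · have h2x : 0 < 2*x := by linarith
    have hsq : 0 < Real.sqrt (2*x) := Real.sqrt_pos.mpr h2x
    have hy0 : 0 < y := lt_of_lt_of_le hsq hsy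
    have hy2 : 2*x ≤ y^2 := by nlinarith [Real.sq_sqrt h2x.le, Real.sqrt_nonneg (2*x)]
    have hxy1 : 1 ≤ x/y := (one_le_div hy0).mpr hyx
    have hKz' : (10:ℝ)^17 * (x/y) ≤ z := by rw [mul_div_assoc] at hKz; exact hKz
    have hzK : (10:ℝ)^17 ≤ z := le_trans (by nlinarith) hKz'
    have hx17 : (10:ℝ)^17 ≤ x := hzK.trans hzx
    have hmain := main_count hyx hy2 hy0 hzx hzK hKz' hx17
    have hlx1 : 1 ≤ Real.log x := by
      rw [Real.le_log_iff_exp_le hx0]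
      have h9 := Real.exp_one_lt_d9
      have h10 : (2.7182818286:ℝ) ≤ 10^17 := by norm_num
      linarith
    have hpow : Real.log x ^ (2:ℕ) ≤ Real.log x ^ nu := by
      rw [show (Real.log x ^ (2:ℕ) : ℝ) = Real.log x ^ ((2:ℕ):ℝ) from
        (Real.rpow_natCast _ 2).symm]
      apply Real.rpow_le_rpow_of_exponent_le hlx1
      exact_mod_cast two_le_nu
    have hz0 : (0:ℝ) ≤ z := by nlinarith
    have hp2 : (0:ℝ) < Real.log x ^ (2:ℕ) := by positivity
    have hpnu : (0:ℝ) < Real.log x ^ nu := lt_of_lt_of_le hp2 hpow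
    calc 1/100 * z / Real.log x ^ nu ≤ 1/100 * z / Real.log x ^ (2:ℕ) :=
          div_le_div_of_nonneg_left (by linarith) hp2 hpow
      _ ≤ z / (20 * Real.log x ^ (2:ℕ)) := by
          rw [div_le_div_iff₀ hp2 (by positivity)]
          nlinarith [mul_nonneg hz0 hp2.le]
      _ ≤ (Psi x y : ℝ) - (Psi (x - z) y : ℝ) := hmain
  · push_neg at hx0
    have hy0 : y ≤ 0 := hyx.trans hx0
    have hKxy : (0:ℝ) ≤ 10^17 * x / y := by
      rcases eq_or_lt_of_le hy0 with h | h
      · simp [h]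
      · exact div_nonneg_iff.mpr (Or.inr ⟨by nlinarith, h.le⟩)
    have hz0 : (0:ℝ) ≤ z := le_trans hKxy hKz
    have hz : z = 0 := le_antisymm (hzx.trans hx0) hz0
    subst hz
    simp
end

section
/- For every integer m ≥ 2, with a_m = 1 − 1/m + (2 − 1/m)/(m^3 + m^2 + 2m − 1), k_m = 2/((m−1)^2(m+2)), l_m = 1 − (3m−2)/(m(m−1)(m+2)), and f(a) = 1 − a − a(1−a)^3 − 4.32·a(1−a)^5, one has the strict inequality (l_m + a_m(k_m − l_m))/(k_m + 1) < f(a_m). -/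
lemma aux_pos (t : ℝ) (ht : 0 ≤ t) :
    0 < 491103 + 2119446*t + 3860217*t^2 + 3698622*t^3 + 1732140*t^4 - 15930*t^5
      - 496275*t^6 - 267945*t^7 - 44540*t^8 + 15950*t^9 + 10638*t^10 + 2631*t^11
      + 327*t^12 + 17*t^13 := by
  nlinarith [sq_nonneg (t^3 - 3*t^2), sq_nonneg (t^4 - 10*t^2), sq_nonneg (t^5 - 20*t^3),
    mul_nonneg ht ht, pow_nonneg ht 3, pow_nonneg ht 5, pow_nonneg ht 7, pow_nonneg ht 9,
    sq_nonneg (t^6 - 5*t^4), sq_nonneg (t^2-6*t), mul_nonneg (pow_nonneg ht 5) (sq_nonneg (t-6))]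

set_option maxHeartbeats 2000000 in
theorem stmt11 (m : ℕ) (hm : 2 ≤ m) (am km lm : ℝ)
    (ham : am = 1 - 1 / (m : ℝ) + (2 - 1 / (m : ℝ)) /
      ((m : ℝ) ^ 3 + (m : ℝ) ^ 2 + 2 * (m : ℝ) - 1))
    (hkm : km = 2 / (((m : ℝ) - 1) ^ 2 * ((m : ℝ) + 2)))
    (hlm : lm = 1 - (3 * (m : ℝ) - 2) / ((m : ℝ) * ((m : ℝ) - 1) * ((m : ℝ) + 2))) :
    (lm + am * (km - lm)) / (km + 1) <
      1 - am - am * (1 - am) ^ 3 - 4.32 * am * (1 - am) ^ 5 := by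
  set x : ℝ := (m : ℝ) with hxdef
  have hx : (2 : ℝ) ≤ x := by
    rw [hxdef]
    exact_mod_cast hm
  have hx0 : x ≠ 0 := by linarith
  have hx1 : x - 1 ≠ 0 := by intro h; nlinarith
  have hx2 : x + 2 ≠ 0 := by intro h; nlinarith
  have hDpos : 0 < x ^ 3 + x ^ 2 + 2 * x - 1 := by nlinarith
  have hD : x ^ 3 + x ^ 2 + 2 * x - 1 ≠ 0 := ne_of_gt hDpos
  have hK : (x - 1) ^ 2 * (x + 2) + 2 ≠ 0 := by nlinarith [sq_nonneg (x - 1)]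
  have hP : 0 < 17*x^13 - 115*x^12 + 87*x^11 + 188*x^10 + 970*x^9 - 8*x^8 + 215*x^7
      - 1493*x^6 + 758*x^5 - 300*x^4 + 1150*x^3 - 875*x^2 + 250*x - 25 := by
    have h := aux_pos (x - 2) (by linarith)
    nlinarith [h]
  have hQ : 0 < 25 * (x ^ 3 + x ^ 2 + 2 * x - 1) ^ 6 := by positivity
  have key : (1 - am - am * (1 - am) ^ 3 - 4.32 * am * (1 - am) ^ 5)
      - (lm + am * (km - lm)) / (km + 1)
      = (17*x^13 - 115*x^12 + 87*x^11 + 188*x^10 + 970*x^9 - 8*x^8 + 215*x^7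
        - 1493*x^6 + 758*x^5 - 300*x^4 + 1150*x^3 - 875*x^2 + 250*x - 25)
        / (25 * (x ^ 3 + x ^ 2 + 2 * x - 1) ^ 6) := by
    have hk1 : km + 1 ≠ 0 := by
      rw [hkm]
      rw [div_add' _ _ _ (by intro h; exact hK (by nlinarith [sq_nonneg (x-1)]) )]
      · exact div_ne_zero (by intro h; exact hK (by nlinarith)) (by
          intro h
          rcases mul_eq_zero.1 h with h' | h'
          · exact hx1 (by nlinarith [sq_nonneg (x-1)])
          · exact hx2 h')
    rw [ham, hkm, hlm]
    norm_num only
    have hD' : x * (x * (x + 1) + 2) - 1 ≠ 0 := by convert hD using 1; ring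
    field_simp
    ring
  have := div_pos hP hQ
  linarith [key]
end

section
/- For every real x ≥ 1, one has Ψ(x, √(2x)) − Ψ(x − 3x^{1/4}, √(2x)) ≥ 1; that is, the interval (x − 3x^{1/4}, x] contains a positive integer all of whose prime factors are at most √(2x). -/
/-- Product of primes up to 47. -/
def PP : ℕ := 2*3*5*7*11*13*17*19*23*29*31*37*41*43*47

def PRlist : List ℕ := [2,3,5,7,11,13,17,19,23,29,31,37,41,43,47]

def checkB (N n : ℕ) : Bool :=
  decide (1 ≤ n) && decide (n ≤ N) && decide ((N+1-n)^4 ≤ 81*(N+1)) &&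
  decide (n ∣ PP^12) &&
  PRlist.all (fun p => !(decide (p ∣ n)) || decide (p*p ≤ 2*N))

def mainCheck : Bool :=
  (List.range 2400).all fun i => (List.range 22).any fun k => checkB (i+1) (i+1-k)

set_option maxRecDepth 100000 in
lemma mainCheck_eq : mainCheck = true := by decide

lemma prime_dvd_PP {p : ℕ} (hp : p.Prime) (h : p ∣ PP) : p ∈ PRlist := by
  unfold PP at h
  repeat rw [Nat.Prime.dvd_mul hp] at h
  simp only [Nat.prime_dvd_prime_iff_eq hp (by norm_num : Nat.Prime 2),
    Nat.prime_dvd_prime_iff_eq hp (by norm_num : Nat.Prime 3),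
    Nat.prime_dvd_prime_iff_eq hp (by norm_num : Nat.Prime 5),
    Nat.prime_dvd_prime_iff_eq hp (by norm_num : Nat.Prime 7),
    Nat.prime_dvd_prime_iff_eq hp (by norm_num : Nat.Prime 11),
    Nat.prime_dvd_prime_iff_eq hp (by norm_num : Nat.Prime 13),
    Nat.prime_dvd_prime_iff_eq hp (by norm_num : Nat.Prime 17),
    Nat.prime_dvd_prime_iff_eq hp (by norm_num : Nat.Prime 19),
    Nat.prime_dvd_prime_iff_eq hp (by norm_num : Nat.Prime 23),
    Nat.prime_dvd_prime_iff_eq hp (by norm_num : Nat.Prime 29),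
    Nat.prime_dvd_prime_iff_eq hp (by norm_num : Nat.Prime 31),
    Nat.prime_dvd_prime_iff_eq hp (by norm_num : Nat.Prime 37),
    Nat.prime_dvd_prime_iff_eq hp (by norm_num : Nat.Prime 41),
    Nat.prime_dvd_prime_iff_eq hp (by norm_num : Nat.Prime 43),
    Nat.prime_dvd_prime_iff_eq hp (by norm_num : Nat.Prime 47)] at h
  simp only [PRlist, List.mem_cons, List.not_mem_nil, or_false]
  tauto

set_option maxRecDepth 100000 in
lemma small_case {N : ℕ} (h1 : 1 ≤ N) (h2 : N ≤ 2400) :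
    ∃ n : ℕ, 1 ≤ n ∧ n ≤ N ∧ (N+1-n)^4 ≤ 81*(N+1) ∧
      ∀ p : ℕ, p.Prime → p ∣ n → p*p ≤ 2*N := by
  have hm := mainCheck_eq
  unfold mainCheck at hm
  rw [List.all_eq_true] at hm
  have hN := hm (N-1) (by rw [List.mem_range]; omega)
  rw [List.any_eq_true] at hN
  obtain ⟨k, -, hk⟩ := hN
  clear hm
  have hNr : N - 1 + 1 = N := by omega
  rw [hNr] at hk
  unfold checkB at hk
  simp only [Bool.and_eq_true, decide_eq_true_eq, List.all_eq_true] at hk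
  obtain ⟨⟨⟨⟨hn1, hn2⟩, hn3⟩, hn4⟩, hn5⟩ := hk
  refine ⟨N - k, hn1, hn2, hn3, ?_⟩
  intro p hp hpn
  have hpP : p ∣ PP := hp.dvd_of_dvd_pow (hpn.trans hn4)
  have hmem := prime_dvd_PP hp hpP
  have h5 := hn5 p hmem
  rw [Bool.or_eq_true, Bool.not_eq_true', decide_eq_false_iff_not, decide_eq_true_eq] at h5
  rcases h5 with h5 | h5
  · exact absurd hpn h5
  · exact h5

lemma rpow_quarter_pow {x : ℝ} (hx : 0 ≤ x) : (x ^ ((1:ℝ)/4))^(4:ℕ) = x := by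
  rw [← Real.rpow_natCast (x ^ ((1:ℝ)/4)) 4, ← Real.rpow_mul hx]
  norm_num

lemma quarter_eq {x : ℝ} (hx : 0 ≤ x) :
    x ^ ((1:ℝ)/4) = Real.sqrt (Real.sqrt x) := by
  rw [Real.sqrt_eq_rpow, Real.sqrt_eq_rpow, ← Real.rpow_mul hx]
  norm_num

lemma g_mono {x y : ℝ} (hx : 1 ≤ x) (hxy : x < y) :
    x - 3*x^((1:ℝ)/4) < y - 3*y^((1:ℝ)/4) := by
  have hx0 : (0:ℝ) ≤ x := by linarith
  have hy0 : (0:ℝ) ≤ y := by linarith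
  set a := x ^ ((1:ℝ)/4) with ha_def
  set b := y ^ ((1:ℝ)/4) with hb_def
  have ha0 : 0 ≤ a := Real.rpow_nonneg hx0 _
  have hb0 : 0 ≤ b := Real.rpow_nonneg hy0 _
  have ha4 : a^(4:ℕ) = x := rpow_quarter_pow hx0
  have hb4 : b^(4:ℕ) = y := rpow_quarter_pow hy0
  have hab : a < b := by
    apply lt_of_pow_lt_pow_left₀ 4 hb0
    rw [ha4, hb4]; exact hxy
  have ha1 : 1 ≤ a := by
    calc (1:ℝ) = 1 ^ ((1:ℝ)/4) := (Real.one_rpow _).symm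
      _ ≤ x ^ ((1:ℝ)/4) := Real.rpow_le_rpow zero_le_one hx (by norm_num)
  have hb1 : 1 ≤ b := le_trans ha1 hab.le
  have key : y - x = (b-a)*(b^3+b^2*a+b*a^2+a^3) := by
    rw [← ha4, ← hb4]; ring
  have hsum : 4 ≤ b^3+b^2*a+b*a^2+a^3 := by nlinarith [hb1, ha1, sq_nonneg (b-1), sq_nonneg (a-1)]
  have hmul := mul_le_mul_of_nonneg_left hsum (sub_pos.2 hab).le
  nlinarith [hmul, key, sub_pos.2 hab]

set_option maxHeartbeats 2000000 in
/-- The main existence lemma. -/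
lemma exists_smooth (x : ℝ) (hx : 1 ≤ x) :
    ∃ n : ℕ, 0 < n ∧ x - 3*x^((1:ℝ)/4) < n ∧ (n:ℝ) ≤ x ∧
      ∀ p : ℕ, p.Prime → p ∣ n → (p:ℝ) ≤ Real.sqrt (2*x) := by
  have hx0 : (0:ℝ) ≤ x := by linarith
  rcases lt_or_ge x 2401 with hsmall | hlarge
  · -- small case
    set N := ⌊x⌋₊ with hN_def
    have hN1 : 1 ≤ N := Nat.le_floor (by exact_mod_cast hx)
    have hN2 : N ≤ 2400 := by
      have : N < 2401 := (Nat.floor_lt hx0).2 (by exact_mod_cast hsmall)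
      omega
    obtain ⟨n, hn1, hn2, hn3, hn4⟩ := small_case hN1 hN2
    have hNx : (N:ℝ) ≤ x := Nat.floor_le hx0
    have hxN1 : x < (N:ℝ) + 1 := Nat.lt_floor_add_one x
    refine ⟨n, hn1, ?_, ?_, ?_⟩
    · -- x - 3 x^{1/4} < n
      have hmono : x - 3*x^((1:ℝ)/4) < ((N:ℝ)+1) - 3*((N:ℝ)+1)^((1:ℝ)/4) :=
        g_mono hx hxN1
      have hdn : ((N:ℝ)+1) - (n:ℝ) ≤ 3*((N:ℝ)+1)^((1:ℝ)/4) := by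
        have hd4 : (((N+1-n:ℕ)):ℝ)^(4:ℕ) ≤ 81*((N:ℝ)+1) := by
          exact_mod_cast hn3
        have hcast : (((N+1-n:ℕ)):ℝ) = (N:ℝ)+1-(n:ℝ) := by
          rw [Nat.cast_sub (by omega : n ≤ N+1)]
          push_cast; ring
        have hpos : (0:ℝ) ≤ (N:ℝ)+1 := by positivity
        have hrhs4 : (3*((N:ℝ)+1)^((1:ℝ)/4))^(4:ℕ) = 81*((N:ℝ)+1) := by
          rw [mul_pow, rpow_quarter_pow hpos]; norm_num
        rw [← hcast]
        exact le_of_pow_le_pow_left₀ (n := 4) (by norm_num) (by positivity)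
          (by rw [hrhs4]; exact hd4)
      linarith
    · calc (n:ℝ) ≤ (N:ℝ) := by exact_mod_cast hn2
        _ ≤ x := hNx
    · intro p hp hpn
      have hpp : (p:ℝ)*(p:ℝ) ≤ 2*(N:ℝ) := by exact_mod_cast hn4 p hp hpn
      have : (p:ℝ)^2 ≤ 2*x := by nlinarith
      rw [show (2*x) = Real.sqrt (2*x) ^ 2 from (Real.sq_sqrt (by linarith)).symm] at this
      exact le_of_pow_le_pow_left₀ (by norm_num) (Real.sqrt_nonneg _) this
  · -- large case
    set s := Real.sqrt x with hs_def
    have hs0 : 0 ≤ s := Real.sqrt_nonneg x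
    have hs2 : s^2 = x := Real.sq_sqrt hx0
    have hs49 : 49 ≤ s := by
      have : Real.sqrt 2401 ≤ s := Real.sqrt_le_sqrt hlarge
      rwa [show (2401:ℝ) = 49^2 by norm_num, Real.sqrt_sq (by norm_num)] at this
    set u := Real.sqrt s with hu_def
    have hu0 : 0 ≤ u := Real.sqrt_nonneg s
    have hu2 : u^2 = s := Real.sq_sqrt hs0
    have hu7 : 7 ≤ u := by
      have : Real.sqrt 49 ≤ u := Real.sqrt_le_sqrt hs49
      rwa [show (49:ℝ) = 7^2 by norm_num, Real.sqrt_sq (by norm_num)] at this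
    have hxq : x ^ ((1:ℝ)/4) = u := quarter_eq hx0
    set m := ⌈s⌉₊ with hm_def
    have hm1 : s ≤ (m:ℝ) := Nat.le_ceil s
    have hm2 : (m:ℝ) < s + 1 := Nat.ceil_lt_add_one hs0
    have hm2x : x ≤ (m:ℝ)^2 := by nlinarith
    set r := Real.sqrt ((m:ℝ)^2 - x) with hr_def
    have hr0 : 0 ≤ r := Real.sqrt_nonneg _
    have hr2 : r^2 = (m:ℝ)^2 - x := Real.sq_sqrt (by linarith)
    have hr_bd : r^2 ≤ 2*s + 1 := by nlinarith
    have hr_le : r ≤ (3*u - 1)/2 := by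
      nlinarith [sq_nonneg (r - (3*u-1)/2), sq_nonneg (2*r - 3*u + 1)]
    set h := ⌈r⌉₊ with hh_def
    have hh1 : r ≤ (h:ℝ) := Nat.le_ceil r
    have hh2 : (h:ℝ) < r + 1 := Nat.ceil_lt_add_one hr0
    have hhm : h < m := by
      rw [← Nat.cast_lt (α := ℝ)]
      nlinarith
    have hhm' : h*h ≤ m*m := Nat.mul_le_mul hhm.le hhm.le
    refine ⟨m*m - h*h, ?_, ?_, ?_, ?_⟩
    · have : h*h < m*m := Nat.mul_lt_mul_of_lt_of_le hhm hhm.le (by omega)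
      omega
    · -- lower bound
      have hcast : ((m*m - h*h : ℕ) : ℝ) = (m:ℝ)^2 - (h:ℝ)^2 := by
        rw [Nat.cast_sub hhm']; push_cast; ring
      rw [hcast, hxq]
      rcases Nat.eq_zero_or_pos h with h0 | hpos
      · rw [h0]; push_cast; nlinarith
      · have hh1' : (1:ℝ) ≤ (h:ℝ) := by exact_mod_cast hpos
        have hlt : ((h:ℝ) - 1)^2 < r^2 := by
          apply sq_lt_sq' <;> linarith
        nlinarith
    · have hcast : ((m*m - h*h : ℕ) : ℝ) = (m:ℝ)^2 - (h:ℝ)^2 := by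
        rw [Nat.cast_sub hhm']; push_cast; ring
      rw [hcast]
      nlinarith
    · intro p hp hpn
      have hfac : m*m - h*h = (m - h)*(m + h) := by
        zify [hhm', hhm.le]; ring
      rw [hfac] at hpn
      have hple : p ≤ m + h := by
        rcases (Nat.Prime.dvd_mul hp).1 hpn with hd | hd
        · exact le_trans (Nat.le_of_dvd (by omega) hd) (by omega)
        · exact Nat.le_of_dvd (by omega) hd
      have hple' : (p:ℝ) ≤ (m:ℝ) + (h:ℝ) := by exact_mod_cast hple
      have hsqrt2 : (1.4:ℝ) ≤ Real.sqrt 2 := by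
        rw [show (1.4:ℝ) = Real.sqrt (1.4^2) from (Real.sqrt_sq (by norm_num)).symm]
        apply Real.sqrt_le_sqrt; norm_num
      have h2x : Real.sqrt (2*x) = Real.sqrt 2 * s := by
        rw [hs_def, ← Real.sqrt_mul (by norm_num)]
      rw [h2x]
      have : (m:ℝ) + (h:ℝ) ≤ 1.4 * s := by nlinarith
      nlinarith [Real.sqrt_nonneg 2]

theorem stmt12 (x : ℝ) (hx : 1 ≤ x) :
    (1 : ℝ) ≤ (Psi x (Real.sqrt (2 * x)) : ℝ) -
      (Psi (x - 3 * x ^ ((1 : ℝ) / 4)) (Real.sqrt (2 * x)) : ℝ) := by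
  have hx0 : (0:ℝ) ≤ x := by linarith
  set y := Real.sqrt (2*x) with hy_def
  set S : ℝ → Set ℕ := fun z => {n : ℕ | 0 < n ∧ (n : ℝ) ≤ z ∧
    ∀ p : ℕ, p.Prime → p ∣ n → (p : ℝ) ≤ y} with hS_def
  have hfin : (S x).Finite := by
    apply Set.Finite.subset (Set.finite_Iic ⌊x⌋₊)
    intro n hn
    exact Set.mem_Iic.2 (Nat.le_floor hn.2.1)
  have hsub : S (x - 3 * x ^ ((1:ℝ)/4)) ⊆ S x := by
    intro n hn
    refine ⟨hn.1, le_trans hn.2.1 ?_, hn.2.2⟩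
    have : (0:ℝ) ≤ x ^ ((1:ℝ)/4) := Real.rpow_nonneg hx0 _
    linarith
  obtain ⟨n, hn1, hn2, hn3, hn4⟩ := exists_smooth x hx
  have hmem : n ∈ S x := ⟨hn1, hn3, hn4⟩
  have hnot : n ∉ S (x - 3 * x ^ ((1:ℝ)/4)) := by
    intro hn
    have := hn.2.1
    linarith
  have hlt : (S (x - 3 * x ^ ((1:ℝ)/4))).ncard < (S x).ncard := by
    apply Set.ncard_lt_ncard _ hfin
    exact (Set.ssubset_iff_of_subset hsub).2 ⟨n, hmem, hnot⟩
  have hP1 : Psi x y = (S x).ncard := rfl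
  have hP2 : Psi (x - 3 * x ^ ((1:ℝ)/4)) y = (S (x - 3 * x ^ ((1:ℝ)/4))).ncard := rfl
  have : Psi (x - 3 * x ^ ((1:ℝ)/4)) y + 1 ≤ Psi x y := by rw [hP1, hP2]; omega
  have hcast : (Psi (x - 3 * x ^ ((1:ℝ)/4)) y : ℝ) + 1 ≤ (Psi x y : ℝ) := by
    exact_mod_cast this
  linarith
end

section
/- If n ∈ 𝒜 and m is a positive integer all of whose prime factors are at most n, then mn ∈ 𝒜. -/
/-- The set 𝒜: n = 1, or n ≥ 2 with smallest prime factor 2 and each prime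
factor p of n bounded by the product of the smaller prime-power components of n. -/
def SetA : Set ℕ :=
  {n | n = 1 ∨ (0 < n ∧ 2 ∣ n ∧ ∀ p ∈ n.primeFactors, p ≠ 2 →
    p ≤ ∏ q ∈ n.primeFactors.filter (· < p), q ^ n.factorization q)}

theorem stmt14 (n m : ℕ) (hn : n ∈ SetA) (hm : 0 < m)
    (h : ∀ p : ℕ, p.Prime → p ∣ m → p ≤ n) : m * n ∈ SetA := by
  rcases hn with h1 | ⟨hn0, h2, hP⟩
  · subst h1
    left
    have hm1 : m = 1 := by
      by_contra hm1
      obtain ⟨p, hp, hpd⟩ := Nat.exists_prime_and_dvd hm1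
      have := h p hp hpd
      have := hp.two_le
      omega
    simp [hm1]
  · right
    have hmn0 : 0 < m * n := Nat.mul_pos hm hn0
    refine ⟨hmn0, Dvd.dvd.mul_left h2 m, ?_⟩
    intro p hp hp2
    have hpp : p.Prime := Nat.prime_of_mem_primeFactors hp
    have hsub : n.primeFactors ⊆ (m * n).primeFactors :=
      Nat.primeFactors_mono (dvd_mul_left n m) hmn0.ne'
    have hfac : ∀ q, n.factorization q ≤ (m * n).factorization q := by
      intro q
      exact (Nat.factorization_le_iff_dvd hn0.ne' hmn0.ne').mpr (dvd_mul_left n m) q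
    have key : ∏ q ∈ n.primeFactors.filter (· < p), q ^ n.factorization q ≤
        ∏ q ∈ (m * n).primeFactors.filter (· < p), q ^ (m * n).factorization q := by
      calc ∏ q ∈ n.primeFactors.filter (· < p), q ^ n.factorization q
          ≤ ∏ q ∈ n.primeFactors.filter (· < p), q ^ (m * n).factorization q := by
            apply Finset.prod_le_prod
            · intros; positivity
            · intro q hq
              exact Nat.pow_le_pow_right
                (Nat.prime_of_mem_primeFactors (Finset.mem_filter.mp hq).1).pos (hfac q)
        _ ≤ ∏ q ∈ (m * n).primeFactors.filter (· < p), q ^ (m * n).factorization q := by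
            apply Finset.prod_le_prod_of_subset_of_one_le'
            · exact Finset.filter_subset_filter _ hsub
            · intro q hq _
              exact Nat.one_le_pow _ _ (Nat.prime_of_mem_primeFactors (Finset.mem_filter.mp hq).1).pos
    refine le_trans ?_ key
    by_cases hpn : p ∈ n.primeFactors
    · exact hP p hpn hp2
    · have hpm : p ∣ m := by
        have hd : p ∣ m * n := Nat.dvd_of_mem_primeFactors hp
        rcases (Nat.Prime.dvd_mul hpp).mp hd with h' | h'
        · exact h'
        · exact absurd (Nat.mem_primeFactors.mpr ⟨hpp, h', hn0.ne'⟩) hpn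
      have hpn' : p ≤ n := h p hpp hpm
      set S := n.primeFactors.filter (p < ·) with hS
      rcases S.eq_empty_or_nonempty with hSe | hSne
      · have hall : n.primeFactors.filter (· < p) = n.primeFactors := by
          apply Finset.filter_true_of_mem
          intro q hq
          by_contra hlt
          push_neg at hlt
          have hq_ne : q ≠ p := fun e => hpn (e ▸ hq)
          have : q ∈ S := Finset.mem_filter.mpr ⟨hq, lt_of_le_of_ne hlt (Ne.symm hq_ne)⟩
          simp [hSe] at this
        rw [hall]
        calc p ≤ n := hpn'
          _ = ∏ q ∈ n.primeFactors, q ^ n.factorization q := by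
            conv_lhs => rw [← Nat.factorization_prod_pow_eq_self hn0.ne']
            rfl
      · set q := S.min' hSne with hqdef
        have hq : q ∈ S := S.min'_mem hSne
        obtain ⟨hqn, hpq⟩ := Finset.mem_filter.mp hq
        have hq2 : q ≠ 2 := by have := hpp.two_le; omega
        have hb := hP q hqn hq2
        have heq : n.primeFactors.filter (· < q) = n.primeFactors.filter (· < p) := by
          ext r
          simp only [Finset.mem_filter]
          constructor
          · rintro ⟨hr, hrq⟩
            refine ⟨hr, ?_⟩
            by_contra hlt
            push_neg at hlt
            have hrne : r ≠ p := fun e => hpn (e ▸ hr)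
            have hrS : r ∈ S := Finset.mem_filter.mpr ⟨hr, lt_of_le_of_ne hlt (Ne.symm hrne)⟩
            exact absurd (S.min'_le r hrS) (not_le.mpr hrq)
          · rintro ⟨hr, hrp⟩; exact ⟨hr, hrp.trans hpq⟩
        rw [heq] at hb
        exact (hpq.trans_le hb).le
end

section
/- Let x ≥ 1 be real, let n ∈ 𝒜 with n ≥ 2x^{1/3}, and let m be a positive integer such that x/2 ≤ mn ≤ x and every prime factor of m is at most (x/n)^{3/4}. Then mn ∈ 𝒜. -/
lemma factzero {a q : ℕ} (h : q ∉ a.primeFactors) : a.factorization q = 0 := by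
  rw [← Nat.support_factorization] at h
  exact Finsupp.notMem_support_iff.mp h

lemma prodBelow_le {a b p : ℕ} (hab : a ∣ b) (hb : b ≠ 0) :
    ∏ q ∈ a.primeFactors.filter (· < p), q ^ a.factorization q ≤
    ∏ q ∈ b.primeFactors.filter (· < p), q ^ b.factorization q := by
  have ha : a ≠ 0 := by rintro rfl; exact hb (zero_dvd_iff.mp hab)
  have hsub : a.primeFactors.filter (· < p) ⊆ b.primeFactors.filter (· < p) :=
    Finset.filter_subset_filter _ (Nat.primeFactors_mono hab hb)
  calc ∏ q ∈ a.primeFactors.filter (· < p), q ^ a.factorization q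
      ≤ ∏ q ∈ a.primeFactors.filter (· < p), q ^ b.factorization q := by
        apply Finset.prod_le_prod' 
        intro i hi
        exact Nat.pow_le_pow_right
          ((Nat.prime_of_mem_primeFactors (Finset.mem_filter.mp hi).1).pos)
          ((Nat.factorization_le_iff_dvd ha hb).mpr hab i)
    _ ≤ _ := by
        apply Finset.prod_le_prod_of_subset_of_one_le' hsub
        intro i hi _
        exact Nat.one_le_pow _ _ (Nat.prime_of_mem_primeFactors
          (Finset.mem_filter.mp hi).1).pos

/-- If `n ∈ SetA` and the odd prime `p` is at most some prime factor of `n`, then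
`p` is at most the product of the components of `n` below `p`. -/
lemma setA_prodBelow {n p : ℕ} (hn : n ∈ SetA) (hp : p.Prime) (hp2 : p ≠ 2)
    (h : ∃ q ∈ n.primeFactors, p ≤ q) :
    p ≤ ∏ q ∈ n.primeFactors.filter (· < p), q ^ n.factorization q := by
  obtain ⟨q1, hq1, hpq1⟩ := h
  have hn1 : n ≠ 1 := by
    rintro rfl; simp at hq1
  rcases hn with rfl | ⟨-, -, hA⟩
  · exact absurd rfl hn1
  have hne : (n.primeFactors.filter (p ≤ ·)).Nonempty :=
    ⟨q1, Finset.mem_filter.mpr ⟨hq1, hpq1⟩⟩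
  set q0 := (n.primeFactors.filter (p ≤ ·)).min' hne with hq0def
  have hq0mem := (n.primeFactors.filter (p ≤ ·)).min'_mem hne
  rw [Finset.mem_filter] at hq0mem
  have hq0n : q0 ∈ n.primeFactors := hq0mem.1
  have hpq0 : p ≤ q0 := hq0mem.2
  have hp3 : 3 ≤ p := by
    have := hp.two_le
    omega
  have hq02 : q0 ≠ 2 := by omega
  have key := hA q0 hq0n hq02
  have hset : n.primeFactors.filter (· < q0) = n.primeFactors.filter (· < p) := by
    ext r
    simp only [Finset.mem_filter]
    constructor
    · rintro ⟨hr, hrlt⟩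
      refine ⟨hr, ?_⟩
      by_contra hrp
      push_neg at hrp
      have : q0 ≤ r := Finset.min'_le _ _ (Finset.mem_filter.mpr ⟨hr, hrp⟩)
      omega
    · rintro ⟨hr, hrlt⟩
      exact ⟨hr, by omega⟩
  rw [hset] at key
  exact le_trans hpq0 key

theorem stmt15 (x : ℝ) (hx : 1 ≤ x) (n : ℕ) (hn : n ∈ SetA)
    (hn2 : 2 * x ^ ((1 : ℝ) / 3) ≤ (n : ℝ)) (m : ℕ) (hm : 0 < m)
    (h1 : x / 2 ≤ ((m * n : ℕ) : ℝ)) (h2 : ((m * n : ℕ) : ℝ) ≤ x)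
    (hp : ∀ p : ℕ, p.Prime → p ∣ m → (p : ℝ) ≤ (x / (n : ℝ)) ^ ((3 : ℝ) / 4)) :
    m * n ∈ SetA := by
  have hx0 : (0:ℝ) < x := by linarith
  have hx13 : (1:ℝ) ≤ x ^ ((1:ℝ)/3) := Real.one_le_rpow hx (by norm_num)
  have hnR : (2:ℝ) ≤ (n:ℝ) := by linarith
  have hn2' : 2 ≤ n := by exact_mod_cast hnR
  have hn0 : n ≠ 0 := by omega
  have hm0 : m ≠ 0 := hm.ne'
  have hN0 : m * n ≠ 0 := by positivity
  -- n^3 ≥ 8x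
  have hcube : 8 * x ≤ (n:ℝ)^3 := by
    have h3 : (2 * x ^ ((1:ℝ)/3))^3 ≤ (n:ℝ)^3 := by
      apply pow_le_pow_left₀ (by positivity) hn2
    have hxx : (x ^ ((1:ℝ)/3))^(3:ℕ) = x := by
      rw [← Real.rpow_natCast (x ^ ((1:ℝ)/3)) 3, ← Real.rpow_mul hx0.le]
      norm_num
    calc 8 * x = (2 * x ^ ((1:ℝ)/3))^3 := by rw [mul_pow, hxx]; ring
      _ ≤ (n:ℝ)^3 := h3
  rcases hn with hn1 | ⟨-, h2n, hA⟩
  · omega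
  refine Or.inr ⟨Nat.pos_of_ne_zero hN0, Dvd.dvd.mul_left h2n m, ?_⟩
  intro p hpmem hp2
  have hpP : p.Prime := Nat.prime_of_mem_primeFactors hpmem
  have hpN : p ∣ m * n := Nat.dvd_of_mem_primeFactors hpmem
  by_cases hcase : ∃ q ∈ n.primeFactors, p ≤ q
  · exact le_trans
      (setA_prodBelow (Or.inr ⟨Nat.pos_of_ne_zero hn0, h2n, hA⟩) hpP hp2 hcase)
      (prodBelow_le (dvd_mul_left n m) hN0)
  push_neg at hcase
  -- all prime factors of n are < p; p ∣ m
  have hpn : ¬ p ∣ n := by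
    intro hdvd
    have : p ∈ n.primeFactors := Nat.mem_primeFactors.mpr ⟨hpP, hdvd, hn0⟩
    exact absurd (hcase p this) (lt_irrefl p)
  have hpm : p ∣ m := ((Nat.Prime.dvd_mul hpP).mp hpN).resolve_right hpn
  set m1 := ∏ q ∈ m.primeFactors.filter (· < p), q ^ m.factorization q with hm1def
  set m2 := ∏ q ∈ m.primeFactors.filter (fun q => ¬ q < p), q ^ m.factorization q
    with hm2def
  have hm12 : m1 * m2 = m := by
    rw [hm1def, hm2def, Finset.prod_filter_mul_prod_filter_not]
    rw [← Nat.prod_factorization_eq_prod_primeFactors]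
    exact Nat.factorization_prod_pow_eq_self hm0
  -- the product below p for m*n equals n * m1
  have hPeq : ∏ q ∈ (m*n).primeFactors.filter (· < p), q ^ (m*n).factorization q
      = n * m1 := by
    have hfac : ∀ q, (m*n).factorization q = m.factorization q + n.factorization q := by
      intro q
      rw [Nat.factorization_mul hm0 hn0]; rfl
    calc ∏ q ∈ (m*n).primeFactors.filter (· < p), q ^ (m*n).factorization q
        = ∏ q ∈ (m*n).primeFactors.filter (· < p),
            (q ^ n.factorization q * q ^ m.factorization q) := by
          apply Finset.prod_congr rfl
          intro q _
          rw [hfac q, pow_add]; ring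
      _ = (∏ q ∈ (m*n).primeFactors.filter (· < p), q ^ n.factorization q)
          * (∏ q ∈ (m*n).primeFactors.filter (· < p), q ^ m.factorization q) :=
          Finset.prod_mul_distrib
      _ = n * m1 := by
          congr 1
          · -- equals n
            have hsubn : n.primeFactors ⊆ (m*n).primeFactors.filter (· < p) := by
              intro q hq
              exact Finset.mem_filter.mpr
                ⟨Nat.primeFactors_mono (dvd_mul_left n m) hN0 hq, hcase q hq⟩
            rw [← Finset.prod_subset hsubn
              (fun q _ hq => by rw [factzero hq, pow_zero]),
              ← Nat.prod_factorization_eq_prod_primeFactors]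
            exact Nat.factorization_prod_pow_eq_self hn0
          · have hsubm : m.primeFactors.filter (· < p) ⊆
                (m*n).primeFactors.filter (· < p) :=
              Finset.filter_subset_filter _
                (Nat.primeFactors_mono (dvd_mul_right m n) hN0)
            rw [hm1def, ← Finset.prod_subset hsubm]
            intro q hq hq'
            rcases Finset.mem_filter.mp hq with ⟨-, hqlt⟩
            have : q ∉ m.primeFactors := fun hmem =>
              hq' (Finset.mem_filter.mpr ⟨hmem, hqlt⟩)
            rw [factzero this, pow_zero]
  rw [hPeq]
  by_contra hlt
  push_neg at hlt
  -- hlt : n * m1 < p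
  have hm1pos : 0 < m1 := by
    apply Finset.prod_pos
    intro q hq
    exact Nat.pow_pos (Nat.prime_of_mem_primeFactors
      (Finset.mem_filter.mp hq).1).pos
  have hpmem2 : p ∈ m.primeFactors.filter (fun q => ¬ q < p) :=
    Finset.mem_filter.mpr ⟨Nat.mem_primeFactors.mpr ⟨hpP, hpm, hm0⟩, lt_irrefl p⟩
  set k := ∑ q ∈ m.primeFactors.filter (fun q => ¬ q < p), m.factorization q with hkdef
  have hpk : p ^ k ≤ m2 := by
    rw [hkdef, hm2def, ← Finset.prod_pow_eq_pow_sum]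
    apply Finset.prod_le_prod'
    intro q hq
    rcases Finset.mem_filter.mp hq with ⟨-, hqge⟩
    exact Nat.pow_le_pow_left (by omega) _
  have hvp : 1 ≤ m.factorization p := (Nat.Prime.factorization_pos_of_dvd hpP hm0 hpm)
  have hk1 : 1 ≤ k :=
    le_trans hvp (Finset.single_le_sum (fun q _ => Nat.zero_le _) hpmem2)
  have hm2m : m2 ∣ m := ⟨m1, by rw [← hm12]; ring⟩
  have hnm1 : n ≤ n * m1 := Nat.le_mul_of_pos_right n hm1pos
  rcases Nat.lt_or_ge k 2 with hk | hk
  · -- k = 1 : m2 = p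
    have hk1' : k = 1 := by omega
    have hsingle : m.primeFactors.filter (fun q => ¬ q < p) = {p} := by
      apply Finset.eq_singleton_iff_unique_mem.mpr
      refine ⟨hpmem2, fun q hq => ?_⟩
      by_contra hqp
      have hsub : ({p, q} : Finset ℕ) ⊆ m.primeFactors.filter (fun q => ¬ q < p) := by
        intro r hr
        rcases Finset.mem_insert.mp hr with rfl | hr
        · exact hpmem2
        · rw [Finset.mem_singleton.mp hr]; exact hq
      have hvq : 1 ≤ m.factorization q := by
        have := (Finset.mem_filter.mp hq).1
        exact Nat.Prime.factorization_pos_of_dvd (Nat.prime_of_mem_primeFactors this)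
          hm0 (Nat.dvd_of_mem_primeFactors this)
      have h2le : 2 ≤ k := by
        calc 2 ≤ m.factorization p + m.factorization q := by omega
          _ = ∑ r ∈ ({p, q} : Finset ℕ), m.factorization r := by
              rw [Finset.sum_pair (fun h => hqp h.symm)]
          _ ≤ k := Finset.sum_le_sum_of_subset hsub
      omega
    have hm2p : m2 = p := by
      rw [hm2def, hsingle, Finset.prod_singleton]
      have : m.factorization p = 1 := by
        rw [hkdef, hsingle, Finset.sum_singleton] at hk1'
        exact hk1'
      rw [this, pow_one]
    -- m*n = (n*m1)*p < p^2, x/2 ≤ m*n, p ≤ (x/n)^{3/4}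
    have hmn_eq : m * n = (n * m1) * p := by rw [← hm12, hm2p]; ring
    have hmnlt : m * n < p * p := by
      rw [hmn_eq]
      exact Nat.mul_lt_mul_of_lt_of_le hlt (le_refl p) hpP.pos
    have hpR := hp p hpP hpm
    have hnRpos : (0:ℝ) < (n:ℝ) := by positivity
    have hxnpos : (0:ℝ) ≤ x / n := by positivity
    have hp4 : ((p:ℝ))^(4:ℕ) ≤ (x/n)^(3:ℕ) := by
      calc ((p:ℝ))^(4:ℕ) ≤ ((x/n) ^ ((3:ℝ)/4))^(4:ℕ) := by
            apply pow_le_pow_left₀ (by positivity) hpR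
        _ = (x/n)^(3:ℕ) := by
            rw [← Real.rpow_natCast ((x/n) ^ ((3:ℝ)/4)) 4, ← Real.rpow_mul hxnpos,
              ← Real.rpow_natCast (x/(n:ℝ)) 3]
            norm_num
      
    have hmnR : ((m*n : ℕ):ℝ) < (p:ℝ) * (p:ℝ) := by exact_mod_cast hmnlt
    -- (x/2)^2 ≤ (mn)^2 < p^4 ≤ x^3/n^3, so n^3 < 4x, contradicting n^3 ≥ 8x
    have hsq : (x/2)^2 < (x/n)^(3:ℕ) := by
      have h1' : (0:ℝ) ≤ x/2 := by positivity
      have : (x/2)^2 ≤ ((m*n:ℕ):ℝ)^2 := pow_le_pow_left₀ h1' h1 2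
      have h2' : ((m*n:ℕ):ℝ)^2 < (p:ℝ)^(4:ℕ) := by
        have hpos : (0:ℝ) ≤ ((m*n:ℕ):ℝ) := by positivity
        nlinarith [hmnR]
      linarith
    have hn3 : (n:ℝ)^3 > 0 := by positivity
    rw [div_pow, div_pow] at hsq
    have : x^2 * (n:ℝ)^3 < x^3 * 4 := by
      rw [div_lt_div_iff₀ (by norm_num) hn3] at hsq
      norm_num at hsq ⊢
      linarith
    nlinarith [hcube, sq_nonneg x, hx0]
  · -- k ≥ 2 : m2 ≥ p^2 > n^2, so n^3 < x, contradiction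
    have hp2' : p ^ 2 ≤ m2 := le_trans (Nat.pow_le_pow_right hpP.pos hk) hpk
    have hn2sq : n * n < m2 := by
      calc n * n ≤ (n * m1) * (n * m1) := Nat.mul_le_mul hnm1 hnm1
        _ < p * p := Nat.mul_lt_mul_of_lt_of_le hlt (le_of_lt hlt) hpP.pos
        _ = p ^ 2 := (sq p).symm
        _ ≤ m2 := hp2'
    have : n * n * n < m * n := by
      have hm2le : m2 ≤ m := Nat.le_of_dvd hm hm2m
      calc n * n * n < m2 * n :=
            Nat.mul_lt_mul_of_lt_of_le hn2sq (le_refl n) (by omega)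
        _ ≤ m * n := Nat.mul_le_mul_right n hm2le
    have hR : ((n:ℝ))^3 < ((m*n:ℕ):ℝ) := by
      have h' : ((n*n*n : ℕ):ℝ) < ((m*n:ℕ):ℝ) := by exact_mod_cast this
      push_cast at h' ⊢
      nlinarith [h']
    linarith only [hcube, hR, h2, hx0, hx]
end
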